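/- The Weyl group of type D_n (n even, n ≥ 4), acting as signed permutations with an even number of sign changes on ℝ^n, acts transitively on the set of maximal orthogonal sets of roots {±(ε_{i_1}+ε_{j_1}), ±(ε_{i_1}−ε_{j_1}), ..., ±(ε_{i_k}+ε_{j_k}), ±(ε_{i_k}−ε_{j_k})} where n = 2k. -/
import Mathlib

/-- The set of roots associated to a perfect matching `f`. -/
private def matchSet {n : ℕ} (f : Fin n → Fin n) : Set (Fin n → ℝ) :=
  {v | ∃ (i : Fin n) (s : ℝ), (s = 1 ∨ s = -1) ∧ i < f i ∧
    (v = s • ((Pi.single i 1 : Fin n → ℝ) + (Pi.single (f i) 1 : Fin n → ℝ)) ∨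
     v = s • ((Pi.single i 1 : Fin n → ℝ) - (Pi.single (f i) 1 : Fin n → ℝ)))}

private lemma single_comp_symm {n : ℕ} (π : Equiv.Perm (Fin n)) (i : Fin n) :
    (Pi.single i (1 : ℝ)) ∘ ⇑π.symm = Pi.single (π i) 1 := by
  funext j
  simp only [Function.comp_apply, Pi.single_apply]
  simp [Equiv.symm_apply_eq]

/-- The cycle type of a fixed-point-free involution on `Fin (2k)` is `k` twos. -/
private lemma invol_cycleType {n k : ℕ} (hn : n = 2 * k) (hk : 0 < k)
    (f : Fin n → Fin n) (hinv : Function.Involutive f) (hfp : ∀ i, f i ≠ i) :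
    (Function.Involutive.toPerm f hinv).cycleType = Multiset.replicate k 2 := by
  set σ := Function.Involutive.toPerm f hinv with hσ
  have hσapp : ∀ i, σ i = f i := fun i => rfl
  have hnpos : 0 < n := by omega
  have hne : σ ≠ 1 := by
    intro h
    have : σ (⟨0, hnpos⟩ : Fin n) = ⟨0, hnpos⟩ := by rw [h]; rfl
    exact hfp _ (by rw [← hσapp]; exact this)
  have h2 : σ ^ 2 = 1 := by
    ext x
    simp [sq, hσapp, hinv x]
  have horder : orderOf σ = 2 := orderOf_eq_prime h2 hne
  have hall : ∀ m ∈ σ.cycleType, m = 2 := by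
    intro m hm
    have h1 := Equiv.Perm.two_le_of_mem_cycleType hm
    have h2' := Equiv.Perm.dvd_of_mem_cycleType hm
    rw [horder] at h2'
    exact Nat.le_antisymm (Nat.le_of_dvd (by norm_num) h2') h1
  have hsupp : σ.support = Finset.univ := by
    ext i
    simp only [Equiv.Perm.mem_support, Finset.mem_univ, iff_true, hσapp]
    exact hfp i
  have hsum : σ.cycleType.sum = n := by
    rw [Equiv.Perm.sum_cycleType, hsupp, Finset.card_univ, Fintype.card_fin]
  have hrep : σ.cycleType = Multiset.replicate (Multiset.card σ.cycleType) 2 :=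
    Multiset.eq_replicate.mpr ⟨rfl, hall⟩
  have hcard : Multiset.card σ.cycleType = k := by
    have : (Multiset.replicate (Multiset.card σ.cycleType) 2).sum = n := by
      rw [← hrep]; exact hsum
    rw [Multiset.sum_replicate, smul_eq_mul] at this
    omega
  rw [hrep, hcard]

/-- If `π` intertwines the matchings `f1` and `f2`, then the permutation map sends
`matchSet f1` into `matchSet f2`. -/
private lemma matchSet_map_subset {n : ℕ} (π : Equiv.Perm (Fin n)) (f1 f2 : Fin n → Fin n)
    (hinv1 : Function.Involutive f1)
    (hc : ∀ x, π (f1 x) = f2 (π x)) :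
    (fun v : Fin n → ℝ => v ∘ ⇑π.symm) '' matchSet f1 ⊆ matchSet f2 := by
  rintro _ ⟨v, ⟨i, s, hs, hlt, hv⟩, rfl⟩
  beta_reduce
  set a := π i with ha
  set b := π (f1 i) with hb
  have hb2 : b = f2 a := hc i
  have hfa : f2 b = a := by
    rw [hb, ← hc (f1 i), hinv1 i]
  have hne' : a ≠ b := by
    intro h
    exact absurd (π.injective h) (ne_of_lt hlt)
  have hcomp_add : (s • ((Pi.single i 1 : Fin n → ℝ) + Pi.single (f1 i) 1)) ∘ ⇑π.symm
      = s • ((Pi.single a 1 : Fin n → ℝ) + Pi.single b 1) := by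
    rw [← single_comp_symm π i, ← single_comp_symm π (f1 i)]
    rfl
  have hcomp_sub : (s • ((Pi.single i 1 : Fin n → ℝ) - Pi.single (f1 i) 1)) ∘ ⇑π.symm
      = s • ((Pi.single a 1 : Fin n → ℝ) - Pi.single b 1) := by
    rw [← single_comp_symm π i, ← single_comp_symm π (f1 i)]
    rfl
  rcases lt_or_gt_of_ne hne' with h | h
  · refine ⟨a, s, hs, by rw [← hb2]; exact h, ?_⟩
    rcases hv with rfl | rfl
    · left; rw [hcomp_add, hb2]
    · right; rw [hcomp_sub, hb2]
  · rcases hv with rfl | rfl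
    · refine ⟨b, s, hs, by rw [hfa]; exact h, ?_⟩
      left; rw [hcomp_add, hfa, add_comm]
    · refine ⟨b, -s, by rcases hs with rfl | rfl <;> simp, by rw [hfa]; exact h, ?_⟩
      right; rw [hcomp_sub, hfa]
      rw [neg_smul, ← smul_neg, neg_sub]

theorem stmt6 (k : ℕ) (hk : 2 ≤ k) (n : ℕ) (hn : n = 2 * k)
    (IsMaxOrth : Set (Fin n → ℝ) → Prop)
    (hdef : ∀ R, IsMaxOrth R ↔ ∃ f : Fin n → Fin n, Function.Involutive f ∧ (∀ i, f i ≠ i) ∧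
      R = {v | ∃ (i : Fin n) (s : ℝ), (s = 1 ∨ s = -1) ∧ i < f i ∧
        (v = s • ((Pi.single i 1 : Fin n → ℝ) + (Pi.single (f i) 1 : Fin n → ℝ)) ∨
         v = s • ((Pi.single i 1 : Fin n → ℝ) - (Pi.single (f i) 1 : Fin n → ℝ)))})
    (R1 R2 : Set (Fin n → ℝ)) (h1 : IsMaxOrth R1) (h2 : IsMaxOrth R2) :
    ∃ g : (Fin n → ℝ) ≃ₗ[ℝ] (Fin n → ℝ),
      (∃ (π : Equiv.Perm (Fin n)) (s : Fin n → ℝ),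
        (∀ i, s i = 1 ∨ s i = -1) ∧ (∏ i, s i) = 1 ∧
        ∀ i, g (Pi.single i 1 : Fin n → ℝ) = s i • (Pi.single (π i) 1 : Fin n → ℝ)) ∧
      g '' R1 = R2 := by
  rw [hdef] at h1 h2
  obtain ⟨f1, hinv1, hfp1, hR1⟩ := h1
  obtain ⟨f2, hinv2, hfp2, hR2⟩ := h2
  have hct : (Function.Involutive.toPerm f1 hinv1).cycleType
      = (Function.Involutive.toPerm f2 hinv2).cycleType := by
    rw [invol_cycleType hn (by omega) f1 hinv1 hfp1,
        invol_cycleType hn (by omega) f2 hinv2 hfp2]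
  obtain ⟨πu, hπ⟩ := Equiv.Perm.isConj_iff_cycleType_eq.mpr hct
  set π : Equiv.Perm (Fin n) := (πu : Equiv.Perm (Fin n)) with hπdef
  have hc : ∀ x, π (f1 x) = f2 (π x) := by
    intro x
    have := congrArg (fun e : Equiv.Perm (Fin n) => e x) hπ
    simpa [Equiv.Perm.mul_apply, Function.Involutive.toPerm] using this
  have hc' : ∀ x, π.symm (f2 x) = f1 (π.symm x) := by
    intro x
    have := hc (π.symm x)
    rw [Equiv.apply_symm_apply] at this
    rw [← this, Equiv.symm_apply_apply]
  refine ⟨LinearEquiv.funCongrLeft ℝ ℝ π.symm, ⟨π, fun _ => 1, fun _ => Or.inl rfl,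
    by simp, fun i => ?_⟩, ?_⟩
  · rw [one_smul]
    show (Pi.single i (1:ℝ)) ∘ ⇑π.symm = Pi.single (π i) 1
    exact single_comp_symm π i
  · rw [hR1, hR2]
    have hgS : ∀ v : Fin n → ℝ, LinearEquiv.funCongrLeft ℝ ℝ π.symm v = v ∘ ⇑π.symm :=
      fun v => rfl
    apply Set.Subset.antisymm
    · intro x hx
      exact matchSet_map_subset π f1 f2 hinv1 hc hx
    · intro x hx
      have hw : x ∘ ⇑π ∈ matchSet f1 := by
        apply matchSet_map_subset π.symm f2 f1 hinv2 hc'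
        exact ⟨x, hx, by simp⟩
      refine ⟨x ∘ ⇑π, hw, ?_⟩
      funext j
      simp [hgS]
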